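/- Let S be a set of primes and {a_n(q)}_{n≥1} ⊆ ℤ[q]. The following are equivalent: (1) {a_n(q)} satisfies the q-Gauss congruences with respect to S; (2) for all m ≥ 1, all n ∈ ℕ_S, and every n-th root of unity ω, one has a_{nm}(ω) = a_{nm/ord(ω)}(1); (3) for all m ≥ 1, all n ∈ ℕ_S, and every divisor d of n, one has a_{nm}(q) ≡ a_{nm/d}(1) mod Φ_d(q), where Φ_d is the d-th cyclotomic polynomial. -/

import Mathlib

open Polynomial Finset

/-- The `q`-analogue `[n]_q = 1 + q + ⋯ + q^{n-1}` in `ℤ[q]`. -/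
noncomputable def qInt (n : ℕ) : Polynomial ℤ := ∑ i ∈ Finset.range n, X ^ i

/-- `n ∈ ℕ_S`: `n` is a positive integer divisible only by primes from `S`. -/
def NatS (S : Set ℕ) (n : ℕ) : Prop := 0 < n ∧ ∀ p : ℕ, p.Prime → p ∣ n → p ∈ S

/-- `{a_n(q)}` satisfies the `q`-Gauss congruences with respect to `S`:
for all `n ∈ ℕ_S` and `m ≥ 1`, `∑_{d ∣ n} μ(d) a_{nm/d}(q^d) ≡ 0 mod [n]_q`. -/
def qGaussWrt (S : Set ℕ) (a : ℕ → Polynomial ℤ) : Prop :=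
  ∀ n m : ℕ, NatS S n → 0 < m →
    qInt n ∣ ∑ d ∈ n.divisors,
      Polynomial.C (ArithmeticFunction.moebius d) * ((a (n * m / d)).comp (X ^ d))

lemma NatS.of_dvd {S : Set ℕ} {n d : ℕ} (hn : NatS S n) (hd : d ∣ n) (hd0 : 0 < d) :
    NatS S d := ⟨hd0, fun p hp hpd => hn.2 p hp (hpd.trans hd)⟩

lemma sum_moebius_divisors {n : ℕ} (hn : n ≠ 1) :
    ∑ d ∈ n.divisors, ArithmeticFunction.moebius d = 0 := by
  have h := congrArg (fun f : ArithmeticFunction ℤ => f n)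
    ArithmeticFunction.moebius_mul_coe_zeta
  simp only [ArithmeticFunction.coe_mul_zeta_apply, ArithmeticFunction.one_apply] at h
  simpa [hn] using h

def Pp (S : Set ℕ) (a : ℕ → Polynomial ℤ) : Prop :=
  ∀ d N : ℕ, NatS S d → d ∣ N → 0 < N → ∀ ζ : ℂ, IsPrimitiveRoot ζ d →
    aeval ζ (a N) = aeval (1 : ℂ) (a (N / d))

section
variable {S : Set ℕ} {a : ℕ → Polynomial ℤ}

lemma Pp_to_mid (h : Pp S a) :
    ∀ m n : ℕ, 0 < m → NatS S n → ∀ ω : ℂ, ω ^ n = 1 →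
      aeval ω (a (n * m)) = aeval (1 : ℂ) (a (n * m / orderOf ω)) := by
  intro m n hm hn ω hω
  have hfin : IsOfFinOrder ω := isOfFinOrder_iff_pow_eq_one.2 ⟨n, hn.1, hω⟩
  have hd0 : 0 < orderOf ω := hfin.orderOf_pos
  have hdn : orderOf ω ∣ n := orderOf_dvd_of_pow_eq_one hω
  exact h (orderOf ω) (n * m) (hn.of_dvd hdn hd0) (hdn.trans (dvd_mul_right n m))
    (Nat.mul_pos hn.1 hm) ω (IsPrimitiveRoot.orderOf ω)

lemma mid_to_Pp
    (h : ∀ m n : ℕ, 0 < m → NatS S n → ∀ ω : ℂ, ω ^ n = 1 →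
      aeval ω (a (n * m)) = aeval (1 : ℂ) (a (n * m / orderOf ω))) : Pp S a := by
  intro d N hd hdN hN ζ hζ
  have hm : 0 < N / d := Nat.div_pos (Nat.le_of_dvd hN hdN) hd.1
  have h2 := h (N / d) d hm hd ζ hζ.pow_eq_one
  rwa [Nat.mul_div_cancel' hdN, ← hζ.eq_orderOf] at h2
lemma qInt_eq_prod {n : ℕ} (hn : 0 < n) :
    qInt n = ∏ i ∈ n.divisors.erase 1, cyclotomic i ℤ :=
  (prod_cyclotomic_eq_geom_sum hn ℤ).symm

lemma qInt_monic {n : ℕ} (hn : 0 < n) : (qInt n).Monic := by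
  rw [qInt_eq_prod hn]
  exact monic_prod_of_monic _ _ fun i _ => cyclotomic.monic i ℤ

lemma aeval_one_int (p : Polynomial ℤ) : aeval (1 : ℂ) p = ((p.eval 1 : ℤ) : ℂ) := by
  rw [aeval_def, eval₂_at_one]
  rfl

lemma cyclotomic_int_dvd_iff {d : ℕ} (hd : 0 < d) {ζ : ℂ} (hζ : IsPrimitiveRoot ζ d)
    (g : Polynomial ℤ) : cyclotomic d ℤ ∣ g ↔ aeval ζ g = 0 := by
  constructor
  · rintro ⟨c, rfl⟩
    rw [map_mul]
    have h0 : aeval ζ (cyclotomic d ℤ) = 0 := by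
      have := hζ.isRoot_cyclotomic hd (R := ℂ)
      rw [aeval_def, eval₂_eq_eval_map, ← map_cyclotomic_int d ℂ] at *
      simpa [IsRoot] using this
    rw [h0, zero_mul]
  · intro h
    have h1 : aeval ζ (g.map (algebraMap ℤ ℚ)) = 0 := by
      rwa [aeval_map_algebraMap]
    have h2 : cyclotomic d ℚ ∣ g.map (algebraMap ℤ ℚ) := by
      rw [cyclotomic_eq_minpoly_rat hζ hd]
      exact minpoly.dvd ℚ ζ h1
    rw [← map_cyclotomic d (algebraMap ℤ ℚ)] at h2
    exact (map_dvd_map _ (algebraMap ℤ ℚ).injective_int (cyclotomic.monic d ℤ)).mp h2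

lemma qInt_dvd_iff {n : ℕ} (hn : 0 < n) (f : Polynomial ℤ) :
    qInt n ∣ f ↔ ∀ d ∈ n.divisors.erase 1, cyclotomic d ℤ ∣ f := by
  constructor
  · intro h d hd
    exact dvd_trans (by rw [qInt_eq_prod hn]; exact Finset.dvd_prod_of_mem _ hd) h
  · intro h
    have hmap : ∀ d ∈ n.divisors.erase 1,
        cyclotomic d ℚ ∣ f.map (algebraMap ℤ ℚ) := by
      intro d hd
      rw [← map_cyclotomic d (algebraMap ℤ ℚ)]
      exact Polynomial.map_dvd _ (h d hd)
    have hprod : (∏ d ∈ n.divisors.erase 1, cyclotomic d ℚ) ∣ f.map (algebraMap ℤ ℚ) := by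
      apply Finset.prod_dvd_of_coprime
      · intro i hi j hj hij
        exact cyclotomic.isCoprime_rat hij
      · exact hmap
    have : (qInt n).map (algebraMap ℤ ℚ) ∣ f.map (algebraMap ℤ ℚ) := by
      rwa [qInt_eq_prod hn, Polynomial.map_prod, Finset.prod_congr rfl
        (fun d _ => map_cyclotomic d (algebraMap ℤ ℚ))]
    exact (map_dvd_map _ (algebraMap ℤ ℚ).injective_int (qInt_monic hn)).mp this


lemma aeval_qInt_eq_zero {d : ℕ} {ζ : ℂ} (hd : 1 < d) (hζ : IsPrimitiveRoot ζ d) :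
    aeval ζ (qInt d) = 0 := by
  have hζ1 : ζ ≠ 1 := by
    intro h
    rw [hζ.eq_orderOf, h, orderOf_one] at hd
    exact lt_irrefl 1 hd
  have : aeval ζ (qInt d) = ∑ i ∈ range d, ζ ^ i := by simp [qInt]
  rw [this, geom_sum_eq hζ1, hζ.pow_eq_one, sub_self, zero_div]

lemma aeval_gsum (a : ℕ → Polynomial ℤ) (ζ : ℂ) (n m : ℕ) :
    aeval ζ (∑ e ∈ n.divisors,
        C (ArithmeticFunction.moebius e) * ((a (n * m / e)).comp (X ^ e)))
      = ∑ e ∈ n.divisors,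
        (ArithmeticFunction.moebius e : ℂ) * aeval (ζ ^ e) (a (n * m / e)) := by
  rw [map_sum]
  refine Finset.sum_congr rfl fun e _ => ?_
  rw [map_mul, aeval_C, aeval_comp, map_pow, aeval_X]
  simp

lemma qGauss_to_Pp {S : Set ℕ} {a : ℕ → Polynomial ℤ} (h : qGaussWrt S a) : Pp S a := by
  intro d
  induction d using Nat.strong_induction_on with
  | _ d ih =>
    intro N hd hdN hN ζ hζ
    by_cases hd1 : d = 1
    · subst hd1
      have hζ1 : ζ = 1 := by have := hζ.pow_eq_one; rwa [pow_one] at this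
      rw [hζ1, Nat.div_one]
    · have h1 : 1 < d := lt_of_le_of_ne hd.1 (Ne.symm hd1)
      have hm : 0 < N / d := Nat.div_pos (Nat.le_of_dvd hN hdN) hd.1
      obtain ⟨c, hc⟩ := h d (N / d) hd hm
      have hz : ∑ e ∈ d.divisors,
          (ArithmeticFunction.moebius e : ℂ) * aeval (ζ ^ e) (a (N / e)) = 0 := by
        have h2 := congrArg (aeval ζ) hc
        rw [aeval_gsum, map_mul, aeval_qInt_eq_zero h1 hζ, zero_mul] at h2
        simpa only [Nat.mul_div_cancel' hdN] using h2
      obtain ⟨k, hk⟩ := hdN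
      have hNd : N / d = k := by rw [hk, Nat.mul_div_cancel_left _ hd.1]
      have key : ∀ e ∈ d.divisors.erase 1,
          aeval (ζ ^ e) (a (N / e)) = aeval (1 : ℂ) (a (N / d)) := by
        intro e he
        obtain ⟨he1, hed⟩ := Finset.mem_erase.1 he
        have hedvd : e ∣ d := (Nat.mem_divisors.1 hed).1
        have he0 : 0 < e := Nat.pos_of_mem_divisors hed
        obtain ⟨j, hj⟩ := id hedvd
        have hj0 : 0 < j := by
          rcases Nat.eq_zero_or_pos j with h | h
          · exfalso; rw [h, mul_zero] at hj; exact hd.1.ne' hj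
          · exact h
        have hk0 : 0 < k := by
          rcases Nat.eq_zero_or_pos k with h | h
          · exfalso; rw [h, mul_zero] at hk; exact hN.ne' hk
          · exact h
        have hde : d / e = j := by rw [hj, Nat.mul_div_cancel_left _ he0]
        have hlt : d / e < d := Nat.div_lt_self hd.1 (lt_of_le_of_ne he0 (Ne.symm he1))
        have horder : orderOf (ζ ^ e) = d / e := by
          rw [orderOf_pow' ζ he0.ne', ← hζ.eq_orderOf]
          congr 1
          exact Nat.gcd_eq_right hedvd
        have hprim : IsPrimitiveRoot (ζ ^ e) (d / e) :=
          horder ▸ IsPrimitiveRoot.orderOf (ζ ^ e)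
        have hNe : N / e = j * k := by
          rw [hk, hj, mul_assoc, Nat.mul_div_cancel_left _ he0]
        have hstep := ih (d / e) hlt (N / e)
          (hd.of_dvd (Nat.div_dvd_of_dvd hedvd) (hde ▸ hj0))
          (by rw [hNe, hde]; exact dvd_mul_right j k)
          (by rw [hNe]; exact Nat.mul_pos hj0 hk0)
          (ζ ^ e) hprim
        rw [hstep, hde, hNe, Nat.mul_div_cancel_left _ hj0, hNd]
      have hone : (1 : ℕ) ∈ d.divisors := Nat.one_mem_divisors.2 hd.1.ne'
      rw [← Finset.add_sum_erase _ _ hone,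
        Finset.sum_congr rfl (fun e he => by rw [key e he]), ← Finset.sum_mul] at hz
      have hsum : ∑ e ∈ d.divisors.erase 1, ArithmeticFunction.moebius e = -1 := by
        have h3 := sum_moebius_divisors hd1
        rw [← Finset.add_sum_erase _ _ hone, ArithmeticFunction.moebius_apply_one] at h3
        linarith
      have hcast : ∑ e ∈ d.divisors.erase 1,
          (ArithmeticFunction.moebius e : ℂ) = -1 := by
        rw [← Int.cast_sum, hsum]; norm_num
      rw [hcast, ArithmeticFunction.moebius_apply_one, pow_one, Nat.div_one] at hz
      linear_combination hz

lemma lcm_mul_prime_eq {p c d : ℕ} (hp : p.Prime) (hpd : p ∣ d) (hpc : ¬ p ∣ c) :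
    Nat.lcm (c * p) d = Nat.lcm c d := by
  have hcop : Nat.Coprime c p := Nat.coprime_comm.mp ((Nat.Prime.coprime_iff_not_dvd hp).2 hpc)
  have h1 : Nat.lcm c p = c * p := Nat.Coprime.lcm_eq_mul hcop
  have h2 : Nat.lcm p d = d :=
    Nat.dvd_antisymm (Nat.lcm_dvd hpd dvd_rfl) (Nat.dvd_lcm_right p d)
  rw [← h1, Nat.lcm_assoc, h2]

lemma Pp_to_qGauss {S : Set ℕ} {a : ℕ → Polynomial ℤ} (h : Pp S a) : qGaussWrt S a := by
  classical
  intro n m hn hm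
  rw [qInt_dvd_iff hn.1]
  intro d hd
  obtain ⟨hd1, hdmem⟩ := Finset.mem_erase.1 hd
  have hddvd : d ∣ n := (Nat.mem_divisors.1 hdmem).1
  have hd0 : 0 < d := Nat.pos_of_mem_divisors hdmem
  obtain ⟨ζ, hζ⟩ : ∃ ζ : ℂ, IsPrimitiveRoot ζ d :=
    ⟨_, Complex.isPrimitiveRoot_exp d hd0.ne'⟩
  rw [cyclotomic_int_dvd_iff hd0 hζ, aeval_gsum a ζ n m]
  have hnm0 : 0 < n * m := Nat.mul_pos hn.1 hm
  have key : ∀ e ∈ n.divisors,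
      aeval (ζ ^ e) (a (n * m / e)) = aeval (1 : ℂ) (a (n * m / Nat.lcm e d)) := by
    intro e he
    have hedvd : e ∣ n := (Nat.mem_divisors.1 he).1
    have he0 : 0 < e := Nat.pos_of_mem_divisors he
    have hg0 : 0 < Nat.gcd d e := Nat.gcd_pos_of_pos_left e hd0
    set d' := d / Nat.gcd d e with hd'
    have horder : orderOf (ζ ^ e) = d' := by
      rw [orderOf_pow' ζ he0.ne', ← hζ.eq_orderOf]
    have hprim : IsPrimitiveRoot (ζ ^ e) d' := horder ▸ IsPrimitiveRoot.orderOf (ζ ^ e)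
    have hd'0 : 0 < d' := Nat.div_pos (Nat.le_of_dvd hd0 (Nat.gcd_dvd_left d e)) hg0
    have hd'd : d' ∣ d := Nat.div_dvd_of_dvd (Nat.gcd_dvd_left d e)
    have hlcm : e * d' = Nat.lcm e d := by
      rw [Nat.lcm, Nat.gcd_comm e d, hd', ← Nat.mul_div_assoc e (Nat.gcd_dvd_left d e)]
    have henm : e ∣ n * m := hedvd.trans (dvd_mul_right n m)
    have hed'nm : e * d' ∣ n * m := by
      rw [hlcm]; exact (Nat.lcm_dvd hedvd hddvd).trans (dvd_mul_right n m)
    have hd'div : d' ∣ n * m / e := (Nat.dvd_div_iff_mul_dvd henm).2 hed'nm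
    have hpos : 0 < n * m / e := Nat.div_pos (Nat.le_of_dvd hnm0 henm) he0
    have := h d' (n * m / e) (hn.of_dvd (hd'd.trans hddvd) hd'0) hd'div hpos (ζ ^ e) hprim
    rw [this, Nat.div_div_eq_div_mul, hlcm]
  rw [Finset.sum_congr rfl (fun e he => by rw [key e he])]
  -- now show the moebius-lcm sum vanishes
  obtain ⟨p, hp, hpd⟩ := Nat.exists_prime_and_dvd hd1
  have hpn : p ∣ n := hpd.trans hddvd
  set f : ℕ → ℂ := fun e =>
    (ArithmeticFunction.moebius e : ℂ) * aeval (1 : ℂ) (a (n * m / Nat.lcm e d)) with hf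
  show ∑ e ∈ n.divisors, f e = 0
  have hfilter : ∑ e ∈ n.divisors.filter Squarefree, f e = ∑ e ∈ n.divisors, f e := by
    apply Finset.sum_filter_of_ne
    intro x _ hfx
    by_contra hsq
    apply hfx
    rw [hf]
    simp [ArithmeticFunction.moebius_eq_zero_of_not_squarefree hsq]
  rw [← hfilter]
  refine Finset.sum_involution
    (fun e _ => if p ∣ e then e / p else e * p) ?_ ?_ ?_ ?_
  · -- cancellation
    intro e he
    obtain ⟨hemem, hesq⟩ := Finset.mem_filter.1 he
    have he0 : 0 < e := Nat.pos_of_mem_divisors hemem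
    by_cases hpe : p ∣ e
    · simp only [if_pos hpe]
      obtain ⟨c, hc⟩ : ∃ c, e = c * p := ⟨e / p, (Nat.div_mul_cancel hpe).symm⟩
      have hpc : ¬ p ∣ c := by
        intro hcontra
        have : p * p ∣ e := by rw [hc]; exact mul_dvd_mul hcontra dvd_rfl
        exact hp.one_lt.ne' (Nat.isUnit_iff.1 (hesq p this))
      have hcop : Nat.Coprime c p :=
        Nat.coprime_comm.mp ((Nat.Prime.coprime_iff_not_dvd hp).2 hpc)
      have hep : e / p = c := by rw [hc, Nat.mul_div_cancel _ hp.pos]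
      rw [hep, hf]
      simp only
      rw [hc, lcm_mul_prime_eq hp hpd hpc,
        ArithmeticFunction.isMultiplicative_moebius.map_mul_of_coprime hcop,
        ArithmeticFunction.moebius_apply_prime hp]
      push_cast
      ring
    · simp only [if_neg hpe]
      have hcop : Nat.Coprime e p :=
        Nat.coprime_comm.mp ((Nat.Prime.coprime_iff_not_dvd hp).2 hpe)
      rw [hf]
      simp only
      rw [lcm_mul_prime_eq hp hpd hpe,
        ArithmeticFunction.isMultiplicative_moebius.map_mul_of_coprime hcop,
        ArithmeticFunction.moebius_apply_prime hp]
      push_cast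
      ring
  · -- g a ≠ a
    intro e he _
    have he0 : 0 < e := Nat.pos_of_mem_divisors (Finset.mem_filter.1 he).1
    by_cases hpe : p ∣ e
    · simp only [if_pos hpe]; exact (Nat.div_lt_self he0 hp.one_lt).ne
    · simp only [if_neg hpe]; exact ((lt_mul_iff_one_lt_right he0).2 hp.one_lt).ne'
  · -- membership
    intro e he
    obtain ⟨hemem, hesq⟩ := Finset.mem_filter.1 he
    have hedvd : e ∣ n := (Nat.mem_divisors.1 hemem).1
    by_cases hpe : p ∣ e
    · simp only [if_pos hpe]
      refine Finset.mem_filter.2 ⟨Nat.mem_divisors.2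
        ⟨(Nat.div_dvd_of_dvd hpe).trans hedvd, hn.1.ne'⟩,
        hesq.squarefree_of_dvd (Nat.div_dvd_of_dvd hpe)⟩
    · simp only [if_neg hpe]
      have hcop : Nat.Coprime e p :=
        Nat.coprime_comm.mp ((Nat.Prime.coprime_iff_not_dvd hp).2 hpe)
      refine Finset.mem_filter.2 ⟨Nat.mem_divisors.2
        ⟨Nat.Coprime.mul_dvd_of_dvd_of_dvd hcop hedvd hpn, hn.1.ne'⟩,
        (Nat.squarefree_mul hcop).2 ⟨hesq, hp.squarefree⟩⟩
  · -- involution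
    intro e he
    obtain ⟨hemem, hesq⟩ := Finset.mem_filter.1 he
    by_cases hpe : p ∣ e
    · simp only [if_pos hpe]
      have hpc : ¬ p ∣ e / p := by
        intro hcontra
        have : p * p ∣ e := by
          have := mul_dvd_mul hcontra (dvd_refl p)
          rwa [Nat.div_mul_cancel hpe] at this
        exact hp.one_lt.ne' (Nat.isUnit_iff.1 (hesq p this))
      simp only [if_neg hpc]
      exact Nat.div_mul_cancel hpe
    · simp only [if_neg hpe]
      simp only [if_pos (dvd_mul_left p e)]
      exact Nat.mul_div_cancel e hp.pos

lemma Pp_to_third {S : Set ℕ} {a : ℕ → Polynomial ℤ} (h : Pp S a) :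
    ∀ m n : ℕ, 0 < m → NatS S n → ∀ d : ℕ, d ∣ n →
      Polynomial.cyclotomic d ℤ ∣ a (n * m) - Polynomial.C ((a (n * m / d)).eval 1) := by
  intro m n hm hn d hdn
  have hd0 : 0 < d := Nat.pos_of_dvd_of_pos hdn hn.1
  have hζ := Complex.isPrimitiveRoot_exp d hd0.ne'
  rw [cyclotomic_int_dvd_iff hd0 hζ, map_sub, aeval_C,
    h d (n * m) (hn.of_dvd hdn hd0) (hdn.trans (dvd_mul_right n m)) (Nat.mul_pos hn.1 hm) _ hζ,
    aeval_one_int]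
  simp

lemma third_to_Pp {S : Set ℕ} {a : ℕ → Polynomial ℤ}
    (h : ∀ m n : ℕ, 0 < m → NatS S n → ∀ d : ℕ, d ∣ n →
      Polynomial.cyclotomic d ℤ ∣ a (n * m) - Polynomial.C ((a (n * m / d)).eval 1)) :
    Pp S a := by
  intro d N hd hdN hN ζ hζ
  have hm : 0 < N / d := Nat.div_pos (Nat.le_of_dvd hN hdN) hd.1
  have h2 := h (N / d) d hm hd d dvd_rfl
  rw [Nat.mul_div_cancel' hdN] at h2
  have h3 := (cyclotomic_int_dvd_iff hd.1 hζ _).1 h2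
  rw [map_sub, aeval_C, sub_eq_zero] at h3
  rw [h3, aeval_one_int]
  simp

theorem stmt1 (S : Set ℕ) (hS : ∀ p ∈ S, Nat.Prime p) (a : ℕ → Polynomial ℤ) :
    (qGaussWrt S a ↔
      ∀ m n : ℕ, 0 < m → NatS S n → ∀ ω : ℂ, ω ^ n = 1 →
        Polynomial.aeval ω (a (n * m)) = Polynomial.aeval (1 : ℂ) (a (n * m / orderOf ω)))
    ∧ ((∀ m n : ℕ, 0 < m → NatS S n → ∀ ω : ℂ, ω ^ n = 1 →
        Polynomial.aeval ω (a (n * m)) = Polynomial.aeval (1 : ℂ) (a (n * m / orderOf ω))) ↔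
      ∀ m n : ℕ, 0 < m → NatS S n → ∀ d : ℕ, d ∣ n →
        Polynomial.cyclotomic d ℤ ∣ a (n * m) - Polynomial.C ((a (n * m / d)).eval 1)) := by
  constructor
  · exact ⟨fun h => Pp_to_mid (qGauss_to_Pp h), fun h => Pp_to_qGauss (mid_to_Pp h)⟩
  · exact ⟨fun h => Pp_to_third (mid_to_Pp h), fun h => Pp_to_mid (third_to_Pp h)⟩
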